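/- arXiv:1901.10222 — 2 statements merged into one kernel-verified Lean document; each statement's English description precedes it below -/
import Mathlib

section
/- Let F ⊆ E be a finite Galois extension and 𝔤 a finite-dimensional Lie algebra over E. Then there is an isomorphism of E-Lie algebras 𝔤_F ⊗_F E ≅ ⨁_{σ ∈ Gal(E,F)} 𝔤^σ, where 𝔤_F is the underlying F-Lie algebra and 𝔤^σ is the σ-conjugate of 𝔤. -/
open scoped TensorProduct DirectSum

/-- A map `φ : V → W` between `E`-vector spaces is `σ`-semilinear if
`φ(λv + μw) = σ(λ)φ(v) + σ(μ)φ(w)`. -/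
def IsSemilinear {E V W : Type*} [Field E] [AddCommGroup V] [AddCommGroup W]
    [Module E V] [Module E W] (σ : E →+* E) (φ : V → W) : Prop :=
  ∀ (a b : E) (v w : V), φ (a • v + b • w) = σ a • φ v + σ b • φ w

/-- `𝔥` is the `σ`-conjugate of `𝔤` if there is a bijective `σ`-semilinear
bracket-preserving map `𝔤 → 𝔥`. -/
def IsConjugate {E : Type*} [Field E] (σ : E →+* E) (𝔤 𝔥 : Type*)
    [LieRing 𝔤] [LieAlgebra E 𝔤] [LieRing 𝔥] [LieAlgebra E 𝔥] : Prop :=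
  ∃ φ : 𝔤 ≃ 𝔥, IsSemilinear σ φ ∧ ∀ X Y : 𝔤, φ ⁅X, Y⁆ = ⁅φ X, φ Y⁆

instance instLieRingExtendRestrictScalars {F E 𝔤 : Type*} [Field F] [Field E] [Algebra F E]
    [LieRing 𝔤] [LieAlgebra E 𝔤] : LieRing (E ⊗[F] RestrictScalars F E 𝔤) :=
  LieAlgebra.ExtendScalars.instLieRing F E (RestrictScalars F E 𝔤)

instance instLieAlgebraExtendRestrictScalars {F E 𝔤 : Type*} [Field F] [Field E] [Algebra F E]
    [LieRing 𝔤] [LieAlgebra E 𝔤] : LieAlgebra E (E ⊗[F] RestrictScalars F E 𝔤) :=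
  LieAlgebra.ExtendScalars.instLieAlgebra F E (RestrictScalars F E 𝔤)

/-- Let `F ⊆ E` be a finite Galois extension and `𝔤` a finite-dimensional Lie algebra
over `E`.  If for each `σ` in the Galois group `Gal(E,F) = (E ≃ₐ[F] E)` the Lie algebra
`𝔥 σ` is a `σ`-conjugate of `𝔤`, then extending scalars of the underlying `F`-Lie
algebra `𝔤_F` back to `E` yields `𝔤_F ⊗_F E ≅ ⨁_{σ ∈ Gal(E,F)} 𝔤^σ`. -/
theorem extendScalars_restrictScalars_iso_directSum_conjugates
    (F E : Type*) [Field F] [Field E] [Algebra F E]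
    [FiniteDimensional F E] [IsGalois F E]
    (𝔤 : Type*) [LieRing 𝔤] [LieAlgebra E 𝔤] [FiniteDimensional E 𝔤]
    (𝔥 : (E ≃ₐ[F] E) → Type*) [∀ σ, LieRing (𝔥 σ)] [∀ σ, LieAlgebra E (𝔥 σ)]
    (hconj : ∀ σ : E ≃ₐ[F] E, IsConjugate (σ : E →+* E) 𝔤 (𝔥 σ)) :
    Nonempty ((E ⊗[F] RestrictScalars F E 𝔤) ≃ₗ⁅E⁆ ⨁ σ, 𝔥 σ) := by
  classical
  choose φ hsemi hbr using hconj
  have hsmul : ∀ (σ : E ≃ₐ[F] E) (c : E) (x : 𝔤), φ σ (c • x) = σ c • φ σ x := by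
    intro σ c x; simpa using hsemi σ c 0 x 0
  have hadd : ∀ (σ : E ≃ₐ[F] E) (x y : 𝔤), φ σ (x + y) = φ σ x + φ σ y := by
    intro σ x y; simpa using hsemi σ 1 1 x y
  -- F-module structures on the conjugates
  letI instmF : ∀ σ : E ≃ₐ[F] E, Module F (𝔥 σ) := fun σ => Module.compHom _ (algebraMap F E)
  haveI insttow : ∀ σ : E ≃ₐ[F] E, IsScalarTower F E (𝔥 σ) := fun σ =>
    ⟨fun f e x => by rw [Algebra.smul_def, mul_smul]; rfl⟩
  haveI instcomm : ∀ σ : E ≃ₐ[F] E, SMulCommClass F E (𝔥 σ) := fun σ =>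
    ⟨fun f e x =>
      show (algebraMap F E f) • e • x = e • (algebraMap F E f) • x from smul_comm _ _ _⟩
  letI : Module E (RestrictScalars F E 𝔤) := RestrictScalars.moduleOrig F E 𝔤
  haveI : Module.Finite E (RestrictScalars F E 𝔤) := ‹FiniteDimensional E 𝔤›
  set ν := RestrictScalars.addEquiv F E 𝔤 with hνdef
  have hν : ∀ x y : RestrictScalars F E 𝔤, ν ⁅x, y⁆ = ⁅ν x, ν y⁆ := fun _ _ => rfl
  -- the linear map
  let bil : E →ₗ[E] (RestrictScalars F E 𝔤 →ₗ[F] (∀ σ : E ≃ₐ[F] E, 𝔥 σ)) :=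
    { toFun := fun e =>
        { toFun := fun x σ => e • φ σ (ν x)
          map_add' := fun x y => by
            funext σ
            show e • φ σ (ν (x + y)) = e • φ σ (ν x) + e • φ σ (ν y)
            rw [map_add, hadd, smul_add]
          map_smul' := fun c x => by
            funext σ
            show e • φ σ (ν (c • x)) = (algebraMap F E c) • (e • φ σ (ν x))
            rw [RestrictScalars.addEquiv_map_smul, hsmul, AlgEquiv.commutes]
            exact smul_comm _ _ _ }
      map_add' := fun e₁ e₂ => by
        refine LinearMap.ext fun x => ?_
        funext σ
        exact add_smul _ _ _
      map_smul' := fun a e => by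
        refine LinearMap.ext fun x => ?_
        funext σ
        exact mul_smul _ _ _ }
  let ψ : (E ⊗[F] RestrictScalars F E 𝔤) →ₗ[E] (∀ σ : E ≃ₐ[F] E, 𝔥 σ) :=
    TensorProduct.AlgebraTensorModule.lift bil
  have hψt : ∀ (a : E) (x : RestrictScalars F E 𝔤) (σ), ψ (a ⊗ₜ[F] x) σ = a • φ σ (ν x) :=
    fun a x σ => rfl
  -- bracket compatibility
  letI : LieRingModule (E ⊗[F] RestrictScalars F E 𝔤) (E ⊗[F] RestrictScalars F E 𝔤) := by
    with_unfolding_all exact lieRingSelfModule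
  have key : ∀ (s t : E ⊗[F] RestrictScalars F E 𝔤) (σ), ψ ⁅s, t⁆ σ = ⁅ψ s σ, ψ t σ⁆ := by
    intro s t
    induction s using TensorProduct.induction_on with
    | zero =>
      intro σ
      have e0' := zero_lie (L := E ⊗[F] RestrictScalars F E 𝔤) (M := E ⊗[F] RestrictScalars F E 𝔤) t
      have e0 : ⁅(0 : E ⊗[F] RestrictScalars F E 𝔤), t⁆ = 0 := e0'
      rw [e0, map_zero]
      simp
    | tmul a x =>
      induction t using TensorProduct.induction_on with
      | zero =>
        intro σ
        have e0' := lie_zero (L := E ⊗[F] RestrictScalars F E 𝔤) (M := E ⊗[F] RestrictScalars F E 𝔤) (a ⊗ₜ[F] x)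
        have e0 : ⁅(a ⊗ₜ[F] x : E ⊗[F] RestrictScalars F E 𝔤), (0 : E ⊗[F] RestrictScalars F E 𝔤)⁆ = 0 := e0'
        rw [e0, map_zero]
        simp
      | tmul b y =>
        intro σ
        erw [LieAlgebra.ExtendScalars.bracket_tmul]
        show (a * b) • φ σ (ν ⁅x, y⁆) = ⁅a • φ σ (ν x), b • φ σ (ν y)⁆
        rw [hν, hbr, smul_lie, lie_smul, smul_smul]
      | add t₁ t₂ h₁ h₂ =>
        intro σ
        have e1' := lie_add (a ⊗ₜ[F] x : E ⊗[F] RestrictScalars F E 𝔤) t₁ t₂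
        have e1 : ⁅(a ⊗ₜ[F] x : E ⊗[F] RestrictScalars F E 𝔤), t₁ + t₂⁆
            = ⁅a ⊗ₜ[F] x, t₁⁆ + ⁅a ⊗ₜ[F] x, t₂⁆ := e1'
        rw [e1, map_add, map_add]
        simp only [Pi.add_apply, h₁ σ, h₂ σ]
        exact (lie_add _ _ _).symm
    | add s₁ s₂ h₁ h₂ =>
      intro σ
      have e1' := add_lie s₁ s₂ t
      have e1 : ⁅s₁ + s₂, t⁆ = ⁅s₁, t⁆ + ⁅s₂, t⁆ := e1'
      rw [e1, map_add, map_add]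
      simp only [Pi.add_apply, h₁ σ, h₂ σ]
      exact (add_lie _ _ _).symm
  -- span of Galois-orbit vectors
  let v : E → ((E ≃ₐ[F] E) → E) := fun b σ => σ b
  have hspan : Submodule.span E (Set.range v) = ⊤ := by
    by_contra hne
    obtain ⟨f, hf0, hfbot⟩ := Submodule.exists_dual_map_eq_bot_of_lt_top
      (lt_top_iff_ne_top.mpr hne) inferInstance
    have hfv : ∀ b : E, f (v b) = 0 := by
      intro b
      have hmem : v b ∈ Submodule.span E (Set.range v) := Submodule.subset_span ⟨b, rfl⟩
      have h2 : f (v b) ∈ Submodule.map f (Submodule.span E (Set.range v)) :=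
        Submodule.mem_map_of_mem hmem
      rwa [hfbot, Submodule.mem_bot] at h2
    have hli : LinearIndependent E (fun σ : E ≃ₐ[F] E => ((σ : E →* E) : E → E)) := by
      refine (linearIndependent_monoidHom E E).comp _ ?_
      intro σ τ h
      exact AlgEquiv.ext fun b => DFunLike.congr_fun h b
    have hc0 : ∀ σ : E ≃ₐ[F] E, f (Pi.single σ (1:E) : _) = 0 := by
      refine Fintype.linearIndependent_iff.mp hli (fun σ => f (Pi.single σ (1:E) : _)) ?_
      funext b
      rw [Finset.sum_apply, Pi.zero_apply]
      have hvb : f (v b) = ∑ σ : E ≃ₐ[F] E, (σ b) * f (Pi.single σ (1:E) : _) := by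
        conv_lhs => rw [← Finset.univ_sum_single (v b)]
        rw [map_sum]
        refine Finset.sum_congr rfl fun σ _ => ?_
        have h3 : (Pi.single σ (v b σ) : (E ≃ₐ[F] E) → E)
            = (σ b) • (Pi.single σ (1 : E) : (E ≃ₐ[F] E) → E) := by
          rw [← Pi.single_smul, smul_eq_mul, mul_one]
        rw [h3, map_smul, smul_eq_mul]
      calc ∑ σ : E ≃ₐ[F] E, f (Pi.single σ (1:E) : _) • ((σ : E →* E) : E → E) b
          = ∑ σ : E ≃ₐ[F] E, (σ b) * f (Pi.single σ (1:E) : _) := by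
            refine Finset.sum_congr rfl fun σ _ => ?_
            simp [mul_comm]
        _ = 0 := by rw [← hvb, hfv]
    apply hf0
    refine LinearMap.ext fun u => ?_
    conv_lhs => rw [← Finset.univ_sum_single u]
    rw [map_sum, LinearMap.zero_apply]
    refine Finset.sum_eq_zero fun σ _ => ?_
    have h3 : (Pi.single σ (u σ) : (E ≃ₐ[F] E) → E)
        = (u σ) • (Pi.single σ (1 : E) : (E ≃ₐ[F] E) → E) := by
      rw [← Pi.single_smul, smul_eq_mul, mul_one]
    rw [h3, map_smul, hc0, smul_zero]
  -- surjectivity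
  have hsurj : Function.Surjective ψ := by
    have hsingle : ∀ (τ : E ≃ₐ[F] E) (y : 𝔥 τ), ∃ t, ψ t = Pi.single τ y := by
      intro τ y
      have hmem : (Pi.single τ (1 : E) : (E ≃ₐ[F] E) → E) ∈ Submodule.span E (Set.range v) := by
        rw [hspan]; trivial
      obtain ⟨n, a, b, hab⟩ := Submodule.mem_span_set'.mp hmem
      choose e he using fun i => (b i).2
      set x₀ : 𝔤 := (φ τ).symm y with hx₀
      refine ⟨∑ i, a i ⊗ₜ[F] ν.symm (e i • x₀), ?_⟩
      have hcoef : ∀ σ : E ≃ₐ[F] E, (∑ i, a i * σ (e i)) = if σ = τ then 1 else 0 := by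
        intro σ
        have h0 := congrFun hab σ
        rw [Finset.sum_apply] at h0
        simp only [Pi.smul_apply, smul_eq_mul] at h0
        rw [Pi.single_apply] at h0
        rw [← h0]
        refine Finset.sum_congr rfl fun i _ => ?_
        congr 1
        exact congrFun (he i) σ
      funext σ
      rw [map_sum, Finset.sum_apply]
      have hterm : ∀ i, ψ (a i ⊗ₜ[F] ν.symm (e i • x₀)) σ = (a i * σ (e i)) • φ σ x₀ := by
        intro i
        rw [hψt, AddEquiv.apply_symm_apply, hsmul, smul_smul]
      rw [Finset.sum_congr rfl fun i _ => hterm i, ← Finset.sum_smul, hcoef]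
      by_cases hστ : σ = τ
      · subst hστ; simp [hx₀]
      · rw [if_neg hστ, zero_smul, Pi.single_eq_of_ne hστ]
    intro p
    choose t ht using fun τ => hsingle τ (p τ)
    refine ⟨∑ τ, t τ, ?_⟩
    rw [map_sum]
    simp_rw [ht]
    exact Finset.univ_sum_single p
  -- dimensions
  have hrank := fun σ : E ≃ₐ[F] E =>
    lift_rank_eq_of_equiv_equiv (R := E) (R' := E) (M := 𝔤) (M' := 𝔥 σ)
      (⟨(σ : E → E), map_zero σ⟩ : ZeroHom E E)
      (AddEquiv.mk' (φ σ) (hadd σ)) σ.bijective (fun c x => hsmul σ c x)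
  haveI hfin : ∀ σ : E ≃ₐ[F] E, FiniteDimensional E (𝔥 σ) := fun σ =>
    Module.rank_lt_aleph0_iff.mp (by
      rw [← Cardinal.lift_lt_aleph0, ← hrank σ, Cardinal.lift_lt_aleph0]
      exact Module.rank_lt_aleph0 E 𝔤)
  have hfr : ∀ σ : E ≃ₐ[F] E, Module.finrank E (𝔥 σ) = Module.finrank E 𝔤 := by
    intro σ
    have h := congrArg Cardinal.toNat (hrank σ)
    rw [Cardinal.toNat_lift, Cardinal.toNat_lift] at h
    exact h.symm
  have h3 : Module.finrank E (RestrictScalars F E 𝔤) = Module.finrank E 𝔤 := rfl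
  haveI : Module.Free F (RestrictScalars F E 𝔤) := by
    with_unfolding_all exact Module.Free.of_divisionRing F _
  haveI : Module.Free E (RestrictScalars F E 𝔤) := by
    with_unfolding_all exact
      @Module.Free.of_divisionRing E (RestrictScalars F E 𝔤) _ _ (RestrictScalars.moduleOrig F E 𝔤)
  have hdim : Module.finrank E (E ⊗[F] RestrictScalars F E 𝔤)
      = Module.finrank E (∀ σ : E ≃ₐ[F] E, 𝔥 σ) := by
    rw [Module.finrank_baseChange, Module.finrank_pi_fintype E,
      ← Module.finrank_mul_finrank F E (RestrictScalars F E 𝔤), h3,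
      Finset.sum_congr rfl fun σ _ => hfr σ, Finset.sum_const, Finset.card_univ,
      Fintype.card_eq_nat_card, IsGalois.card_aut_eq_finrank F E, smul_eq_mul]
  haveI : Module.Finite F (RestrictScalars F E 𝔤) := Module.Finite.trans E _
  have hinj : Function.Injective ψ :=
    (LinearMap.injective_iff_surjective_of_finrank_eq_finrank hdim).mpr hsurj
  -- assemble
  let ℓ := DirectSum.linearEquivFunOnFintype E (E ≃ₐ[F] E) 𝔥
  have happ : ∀ (d : ⨁ σ, 𝔥 σ) (σ : E ≃ₐ[F] E), ℓ d σ = d σ := fun d σ => rfl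
  let e₁ : (E ⊗[F] RestrictScalars F E 𝔤) ≃ₗ[E] (∀ σ : E ≃ₐ[F] E, 𝔥 σ) :=
    LinearEquiv.ofBijective ψ ⟨hinj, hsurj⟩
  have he₁ : ∀ t, e₁ t = ψ t := fun t => rfl
  let eD : (E ⊗[F] RestrictScalars F E 𝔤) ≃ₗ[E] ⨁ σ, 𝔥 σ := e₁.trans ℓ.symm
  have heD : ∀ t σ, (eD t) σ = ψ t σ := by
    intro t σ
    have h4 : ℓ (eD t) = ψ t := by
      show ℓ (ℓ.symm (e₁ t)) = ψ t
      rw [LinearEquiv.apply_symm_apply, he₁]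
    rw [← happ (eD t) σ, h4]
  have hmaplie : ∀ s t, eD ⁅s, t⁆ = ⁅eD s, eD t⁆ := by
    intro s t
    apply ℓ.injective
    funext σ
    calc ℓ (eD ⁅s, t⁆) σ = (eD ⁅s, t⁆) σ := happ _ _
      _ = ψ ⁅s, t⁆ σ := heD _ σ
      _ = ⁅ψ s σ, ψ t σ⁆ := key s t σ
      _ = ⁅(eD s) σ, (eD t) σ⁆ := by rw [heD, heD]
      _ = ⁅eD s, eD t⁆ σ := by rw [DirectSum.bracket_apply]
      _ = ℓ ⁅eD s, eD t⁆ σ := (happ _ _).symm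
  exact ⟨LieEquiv.ofBijective
    { toLinearMap := eD.toLinearMap, map_lie' := fun {s t} => hmaplie s t }
    eD.bijective⟩
end

section
/- For λ ∈ ℂ∗, the complex Lie algebra r_{3,λ}(ℂ) with basis X₁, X₂, X₃ and brackets [X₁,X₂] = X₂, [X₁,X₃] = λX₃ is defined over a subfield F ⊆ ℂ if and only if λ² + aλ + 1 = 0 for some a ∈ F. -/
universe u

/-- A complex Lie algebra `𝔤` is defined over a subfield `F ⊆ ℂ` if it admits a basis
all of whose structure constants lie in `F`. -/
def IsDefinedOverSubfield (F : Subfield ℂ) (𝔤 : Type u) [LieRing 𝔤] [LieAlgebra ℂ 𝔤] :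
    Prop :=
  ∃ (ι : Type u) (b : Module.Basis ι ℂ 𝔤), ∀ i j k, b.repr ⁅b i, b j⁆ k ∈ F

section Helpers

variable {𝔤 : Type u} [LieRing 𝔤] [LieAlgebra ℂ 𝔤]

lemma trace_eq_sum_repr {ι : Type*} [Fintype ι] [DecidableEq ι] (b : Module.Basis ι ℂ 𝔤)
    (f : 𝔤 →ₗ[ℂ] 𝔤) :
    LinearMap.trace ℂ 𝔤 f = ∑ k, b.repr (f (b k)) k := by
  rw [LinearMap.trace_eq_matrix_trace ℂ b f, Matrix.trace]
  simp [Matrix.diag, LinearMap.toMatrix_apply]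


lemma final_alg (F : Subfield ℂ) (l t k0 : ℂ) (hl : l ≠ 0) (hti : t ≠ 0)
    (htF : t ∈ F) (hk0F : k0 ∈ F)
    (hident : (1 + l) ^ 2 * k0 = (1 + l ^ 2) * (t * t)) :
    ∃ a ∈ F, l ^ 2 + a * l + 1 = 0 := by
  have hsub : t ^ 2 - k0 ≠ 0 := by
    intro h
    have hk : k0 = t ^ 2 := by linear_combination -h
    rw [hk] at hident
    have h2 : ((1 + l) ^ 2 - (1 + l ^ 2)) * t ^ 2 = 0 := by linear_combination hident
    rcases mul_eq_zero.1 h2 with h3 | h3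
    · exact hl (by linear_combination h3 / 2)
    · exact hti (pow_eq_zero_iff two_ne_zero |>.mp h3)
  refine ⟨-(2 * k0 / (t ^ 2 - k0)), ?_, ?_⟩
  · exact F.neg_mem (F.div_mem
      (F.mul_mem (by rw [show (2:ℂ) = 1 + 1 by norm_num]; exact F.add_mem F.one_mem F.one_mem) hk0F)
      (F.sub_mem (by rw [sq]; exact F.mul_mem htF htF) hk0F))
  · field_simp
    linear_combination -hident

theorem fwd (F : Subfield ℂ) (l : ℂ) (hl : l ≠ 0)
    (𝔤 : Type u) [LieRing 𝔤] [LieAlgebra ℂ 𝔤] (X : Module.Basis (Fin 3) ℂ 𝔤)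
    (h12 : ⁅X 0, X 1⁆ = X 1) (h13 : ⁅X 0, X 2⁆ = l • X 2) (h23 : ⁅X 1, X 2⁆ = 0)
    (hdef : ∃ (ι : Type u) (b : Module.Basis ι ℂ 𝔤), ∀ i j k, b.repr ⁅b i, b j⁆ k ∈ F) :
    ∃ a ∈ F, l ^ 2 + a * l + 1 = 0 := by
  by_cases hlm1 : l = -1
  · refine ⟨2, by rw [show (2:ℂ) = 1 + 1 by norm_num]; exact F.add_mem F.one_mem F.one_mem, ?_⟩
    rw [hlm1]; ring
  obtain ⟨ι, b, hb⟩ := hdef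
  haveI : FiniteDimensional ℂ 𝔤 := Module.Finite.of_basis X
  haveI : Fintype ι := FiniteDimensional.fintypeBasisIndex b
  haveI : DecidableEq ι := Classical.decEq ι
  classical
  have h32 : ⁅X 2, X 1⁆ = 0 := by rw [← lie_skew, h23, neg_zero]
  have h21 : ⁅X 1, X 0⁆ = -X 1 := by rw [← lie_skew, h12]
  have h31 : ⁅X 2, X 0⁆ = -(l • X 2) := by rw [← lie_skew, h13]
  set τ : 𝔤 →ₗ[ℂ] ℂ :=
    (LinearMap.trace ℂ 𝔤) ∘ₗ (LieAlgebra.ad ℂ 𝔤 : 𝔤 →ₗ[ℂ] Module.End ℂ 𝔤) with hτ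
  set K : LinearMap.BilinForm ℂ 𝔤 := killingForm ℂ 𝔤 with hK
  have hτ_apply : ∀ y : 𝔤, τ y = LinearMap.trace ℂ 𝔤 (LieAlgebra.ad ℂ 𝔤 y) := fun y => rfl
  have hK_apply : ∀ y z : 𝔤,
      K y z = LinearMap.trace ℂ 𝔤 ((LieAlgebra.ad ℂ 𝔤 y) ∘ₗ (LieAlgebra.ad ℂ 𝔤 z)) :=
    fun y z => killingForm_apply_apply ℂ 𝔤 y z
  -- values on basis X
  have hτ0 : τ (X 0) = 1 + l := by
    rw [hτ_apply, trace_eq_sum_repr X, Fin.sum_univ_three]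
    simp [LieAlgebra.ad_apply, lie_self, h12, h13]
  have hτ1 : τ (X 1) = 0 := by
    rw [hτ_apply, trace_eq_sum_repr X, Fin.sum_univ_three]
    simp [LieAlgebra.ad_apply, lie_self, h21, h23]
  have hτ2 : τ (X 2) = 0 := by
    rw [hτ_apply, trace_eq_sum_repr X, Fin.sum_univ_three]
    simp [LieAlgebra.ad_apply, lie_self, h31, h32]
  have hK00 : K (X 0) (X 0) = 1 + l ^ 2 := by
    rw [hK_apply, trace_eq_sum_repr X, Fin.sum_univ_three]
    simp [LieAlgebra.ad_apply, lie_self, h12, h13, sq]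
  have hKother : ∀ i j : Fin 3, ¬(i = 0 ∧ j = 0) → K (X i) (X j) = 0 := by
    intro i j hij
    rw [hK_apply]
    rw [trace_eq_sum_repr X, Fin.sum_univ_three]
    fin_cases i <;> fin_cases j
    · exact absurd ⟨rfl, rfl⟩ hij
    · show X.repr ⁅X 0, ⁅X 1, X 0⁆⁆ 0 + X.repr ⁅X 0, ⁅X 1, X 1⁆⁆ 1 + X.repr ⁅X 0, ⁅X 1, X 2⁆⁆ 2 = 0
      rw [h21, h23, lie_self, lie_neg, h12]
      simp
    · show X.repr ⁅X 0, ⁅X 2, X 0⁆⁆ 0 + X.repr ⁅X 0, ⁅X 2, X 1⁆⁆ 1 + X.repr ⁅X 0, ⁅X 2, X 2⁆⁆ 2 = 0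
      rw [h31, h32, lie_self, lie_neg, lie_smul, h13]
      simp
    · show X.repr ⁅X 1, ⁅X 0, X 0⁆⁆ 0 + X.repr ⁅X 1, ⁅X 0, X 1⁆⁆ 1 + X.repr ⁅X 1, ⁅X 0, X 2⁆⁆ 2 = 0
      rw [lie_self, h12, h13, lie_smul, h23]
      simp
    · show X.repr ⁅X 1, ⁅X 1, X 0⁆⁆ 0 + X.repr ⁅X 1, ⁅X 1, X 1⁆⁆ 1 + X.repr ⁅X 1, ⁅X 1, X 2⁆⁆ 2 = 0
      rw [h21, h23, lie_self, lie_neg, lie_self]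
      simp
    · show X.repr ⁅X 1, ⁅X 2, X 0⁆⁆ 0 + X.repr ⁅X 1, ⁅X 2, X 1⁆⁆ 1 + X.repr ⁅X 1, ⁅X 2, X 2⁆⁆ 2 = 0
      rw [h31, h32, lie_self, lie_neg, lie_smul, h23]
      simp
    · show X.repr ⁅X 2, ⁅X 0, X 0⁆⁆ 0 + X.repr ⁅X 2, ⁅X 0, X 1⁆⁆ 1 + X.repr ⁅X 2, ⁅X 0, X 2⁆⁆ 2 = 0
      rw [lie_self, h12, h13, lie_smul, h32]
      simp
    · show X.repr ⁅X 2, ⁅X 1, X 0⁆⁆ 0 + X.repr ⁅X 2, ⁅X 1, X 1⁆⁆ 1 + X.repr ⁅X 2, ⁅X 1, X 2⁆⁆ 2 = 0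
      rw [h21, h23, lie_self, lie_neg, h32]
      simp
    · show X.repr ⁅X 2, ⁅X 2, X 0⁆⁆ 0 + X.repr ⁅X 2, ⁅X 2, X 1⁆⁆ 1 + X.repr ⁅X 2, ⁅X 2, X 2⁆⁆ 2 = 0
      rw [h31, h32, lie_self, lie_neg, lie_smul, lie_self]
      simp
  -- the bilinear identity
  set B : LinearMap.BilinForm ℂ 𝔤 := (LinearMap.mul ℂ ℂ).compl₁₂ τ τ with hB
  have key : ((1 + l) ^ 2) • K = ((1 + l ^ 2)) • B := by
    apply LinearMap.ext_basis X X
    intro i j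
    have hBij : ∀ i j : Fin 3, B (X i) (X j) = τ (X i) * τ (X j) := fun _ _ => rfl
    have expand : ∀ i j : Fin 3,
        (((1 + l) ^ 2) • K) (X i) (X j) = (1+l)^2 * K (X i) (X j) ∧
        (((1 + l ^ 2)) • B) (X i) (X j) = (1+l^2) * (τ (X i) * τ (X j)) := by
      intro i j
      constructor <;> simp [hBij]
    rw [(expand i j).1, (expand i j).2]
    by_cases hij : i = 0 ∧ j = 0
    · rw [hij.1, hij.2, hK00, hτ0]; ring
    · rw [hKother i j hij]
      have : τ (X i) * τ (X j) = 0 := by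
        rcases not_and_or.1 hij with h | h
        · have : τ (X i) = 0 := by fin_cases i <;> simp_all [hτ1, hτ2]
          rw [this]; ring
        · have : τ (X j) = 0 := by fin_cases j <;> simp_all [hτ1, hτ2]
          rw [this]; ring
      rw [this]; ring
  -- structure constants give membership
  have hτb : ∀ i : ι, τ (b i) ∈ F := by
    intro i
    rw [hτ_apply, trace_eq_sum_repr b, ]
    exact F.sum_mem fun k _ => by
      simpa [LieAlgebra.ad_apply] using hb i k k
  have hKb : ∀ i : ι, K (b i) (b i) ∈ F := by
    intro i
    rw [hK_apply, trace_eq_sum_repr b]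
    refine F.sum_mem fun k _ => ?_
    have expand : ((LieAlgebra.ad ℂ 𝔤) (b i) ∘ₗ (LieAlgebra.ad ℂ 𝔤) (b i)) (b k)
        = ∑ m, (b.repr ⁅b i, b k⁆) m • ⁅b i, b m⁆ := by
      rw [LinearMap.comp_apply]
      rw [show (LieAlgebra.ad ℂ 𝔤) (b i) ((LieAlgebra.ad ℂ 𝔤) (b i) (b k))
          = ⁅b i, ⁅b i, b k⁆⁆ from rfl]
      conv_lhs => rw [← b.sum_repr ⁅b i, b k⁆]
      rw [show ⁅b i, ∑ m, (b.repr ⁅b i, b k⁆) m • b m⁆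
          = (LieAlgebra.ad ℂ 𝔤) (b i) (∑ m, (b.repr ⁅b i, b k⁆) m • b m) from rfl]
      rw [map_sum]
      simp [LieAlgebra.ad_apply]
    rw [expand]
    rw [map_sum]
    simp only [map_smul, Finsupp.coe_finset_sum, Finsupp.coe_smul, Finset.sum_apply,
      Pi.smul_apply, smul_eq_mul]
    exact F.sum_mem fun m _ => F.mul_mem (hb i k m) (hb i m k)
  -- find a basis vector with nonzero trace
  have hne : ∃ i : ι, τ (b i) ≠ 0 := by
    by_contra hno
    push_neg at hno
    have : τ = 0 := b.ext fun i => by rw [hno i]; rfl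
    have h0 : τ (X 0) = 0 := by rw [this]; rfl
    rw [hτ0] at h0
    exact hlm1 (by linear_combination h0)
  obtain ⟨i, hti⟩ := hne
  set t : ℂ := τ (b i) with htdef
  set k0 : ℂ := K (b i) (b i) with hk0def
  have htF : t ∈ F := hτb i
  have hk0F : k0 ∈ F := hKb i
  -- the key identity applied at (b i, b i)
  have hident : (1 + l) ^ 2 * k0 = (1 + l ^ 2) * (t * t) := by
    have := congrArg (fun (f : LinearMap.BilinForm ℂ 𝔤) => f (b i) (b i)) key
    simp at this
    exact this
  exact final_alg F l t k0 hl hti htF hk0F hident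



lemma repr_mem3 (F : Subfield ℂ) (b : Module.Basis (Fin 3) ℂ 𝔤) (y : 𝔤) (c : Fin 3 → ℂ)
    (hy : y = c 0 • b 0 + c 1 • b 1 + c 2 • b 2) (hc : ∀ m, c m ∈ F) (k : Fin 3) :
    b.repr y k ∈ F := by
  subst hy
  simp only [map_add, map_smul, Module.Basis.repr_self, Finsupp.coe_add, Finsupp.coe_smul,
    Pi.add_apply, Pi.smul_apply, Finsupp.single_apply, smul_eq_mul]
  refine F.add_mem (F.add_mem ?_ ?_) ?_ <;>
    split_ifs <;> simp [hc 0, hc 1, hc 2, F.zero_mem]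

lemma defined_of_fin3 (F : Subfield ℂ) (b : Module.Basis (Fin 3) ℂ 𝔤)
    (h : ∀ i j k, b.repr ⁅b i, b j⁆ k ∈ F) :
    ∃ (ι : Type u) (b' : Module.Basis ι ℂ 𝔤), ∀ i j k, b'.repr ⁅b' i, b' j⁆ k ∈ F := by
  refine ⟨ULift.{u} (Fin 3), b.reindex (Equiv.ulift.{u,0}).symm, ?_⟩
  intro i j k
  rw [Module.Basis.reindex_apply, Module.Basis.reindex_apply, Module.Basis.repr_reindex_apply]
  simpa using h i.down j.down k.down

/-- If all nine brackets of a `Fin 3` basis decompose with coefficients in `F`,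
the algebra is defined over `F`. -/
lemma defined_of_brackets (F : Subfield ℂ) (b : Module.Basis (Fin 3) ℂ 𝔤)
    (c : Fin 3 → Fin 3 → Fin 3 → ℂ)
    (hbr : ∀ i j, ⁅b i, b j⁆ = c i j 0 • b 0 + c i j 1 • b 1 + c i j 2 • b 2)
    (hc : ∀ i j m, c i j m ∈ F) :
    ∃ (ι : Type u) (b' : Module.Basis ι ℂ 𝔤), ∀ i j k, b'.repr ⁅b' i, b' j⁆ k ∈ F :=
  defined_of_fin3 F b fun i j k => repr_mem3 F b _ (c i j) (hbr i j) (hc i j) k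

theorem bwd (𝔤 : Type u) [LieRing 𝔤] [LieAlgebra ℂ 𝔤] (F : Subfield ℂ) (l : ℂ) (hl : l ≠ 0)
    (X : Module.Basis (Fin 3) ℂ 𝔤)
    (h12 : ⁅X 0, X 1⁆ = X 1) (h13 : ⁅X 0, X 2⁆ = l • X 2) (h23 : ⁅X 1, X 2⁆ = 0)
    (a : ℂ) (ha : a ∈ F) (hq : l ^ 2 + a * l + 1 = 0) :
    ∃ (ι : Type u) (b : Module.Basis ι ℂ 𝔤), ∀ i j k, b.repr ⁅b i, b j⁆ k ∈ F := by
  have hrank : Fintype.card (Fin 3) = Module.finrank ℂ 𝔤 := by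
    simp [Module.finrank_eq_card_basis X]
  have h32 : ⁅X 2, X 1⁆ = 0 := by rw [← lie_skew, h23, neg_zero]
  have h21 : ⁅X 1, X 0⁆ = -X 1 := by rw [← lie_skew, h12]
  have h31 : ⁅X 2, X 0⁆ = -(l • X 2) := by rw [← lie_skew, h13]
  have hF0 := F.zero_mem
  have hF1 := F.one_mem
  by_cases hl1 : l = 1
  · -- basis X works
    refine defined_of_brackets F X
      ![![![0,0,0], ![0,1,0], ![0,0,1]],
        ![![0,-1,0], ![0,0,0], ![0,0,0]],
        ![![0,0,-1], ![0,0,0], ![0,0,0]]] ?_ ?_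
    · intro i j
      fin_cases i <;> fin_cases j
      · show ⁅X 0, X 0⁆ = (0:ℂ) • X 0 + (0:ℂ) • X 1 + (0:ℂ) • X 2
        rw [lie_self]; module
      · show ⁅X 0, X 1⁆ = (0:ℂ) • X 0 + (1:ℂ) • X 1 + (0:ℂ) • X 2
        rw [h12]; module
      · show ⁅X 0, X 2⁆ = (0:ℂ) • X 0 + (0:ℂ) • X 1 + (1:ℂ) • X 2
        rw [h13, hl1]; module
      · show ⁅X 1, X 0⁆ = (0:ℂ) • X 0 + (-1:ℂ) • X 1 + (0:ℂ) • X 2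
        rw [h21]; module
      · show ⁅X 1, X 1⁆ = (0:ℂ) • X 0 + (0:ℂ) • X 1 + (0:ℂ) • X 2
        rw [lie_self]; module
      · show ⁅X 1, X 2⁆ = (0:ℂ) • X 0 + (0:ℂ) • X 1 + (0:ℂ) • X 2
        rw [h23]; module
      · show ⁅X 2, X 0⁆ = (0:ℂ) • X 0 + (0:ℂ) • X 1 + (-1:ℂ) • X 2
        rw [h31, hl1]; module
      · show ⁅X 2, X 1⁆ = (0:ℂ) • X 0 + (0:ℂ) • X 1 + (0:ℂ) • X 2
        rw [h32]; module
      · show ⁅X 2, X 2⁆ = (0:ℂ) • X 0 + (0:ℂ) • X 1 + (0:ℂ) • X 2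
        rw [lie_self]; module
    · intro i j m
      fin_cases i <;> fin_cases j <;> fin_cases m <;>
        first
          | exact hF0
          | exact hF1
          | exact F.neg_mem hF1
  · -- l ≠ 1 : change of basis
    by_cases hlm1 : l = -1
    · -- basis X0, X1+X2, X1-X2
      set v : Fin 3 → 𝔤 := ![X 0, X 1 + X 2, X 1 - X 2] with hv
      have hspan : ⊤ ≤ Submodule.span ℂ (Set.range v) := by
        rw [← X.span_eq]
        apply Submodule.span_le.2
        rintro x ⟨i, rfl⟩
        have m0 : v 0 ∈ Submodule.span ℂ (Set.range v) := Submodule.subset_span ⟨0, rfl⟩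
        have m1 : v 1 ∈ Submodule.span ℂ (Set.range v) := Submodule.subset_span ⟨1, rfl⟩
        have m2 : v 2 ∈ Submodule.span ℂ (Set.range v) := Submodule.subset_span ⟨2, rfl⟩
        have e1 : X 1 = (2:ℂ)⁻¹ • (v 1 + v 2) := by
          show X 1 = (2:ℂ)⁻¹ • ((X 1 + X 2) + (X 1 - X 2))
          match_scalars <;> norm_num
        have e2 : X 2 = (2:ℂ)⁻¹ • (v 1 - v 2) := by
          show X 2 = (2:ℂ)⁻¹ • ((X 1 + X 2) - (X 1 - X 2))
          match_scalars <;> norm_num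
        have mX0 : X 0 ∈ Submodule.span ℂ (Set.range v) := m0
        have mX1 : X 1 ∈ Submodule.span ℂ (Set.range v) := by
          rw [e1]; exact Submodule.smul_mem _ _ (Submodule.add_mem _ m1 m2)
        have mX2 : X 2 ∈ Submodule.span ℂ (Set.range v) := by
          rw [e2]; exact Submodule.smul_mem _ _ (Submodule.sub_mem _ m1 m2)
        fin_cases i
        · exact mX0
        · exact mX1
        · exact mX2
      let b := basisOfTopLeSpanOfCardEqFinrank v hspan hrank
      have hb : ⇑b = v := coe_basisOfTopLeSpanOfCardEqFinrank v hspan hrank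
      refine defined_of_brackets F b
        ![![![0,0,0], ![0,0,1], ![0,1,0]],
          ![![0,0,-1], ![0,0,0], ![0,0,0]],
          ![![0,-1,0], ![0,0,0], ![0,0,0]]] ?_ ?_
      · intro i j
        have bv : ∀ m : Fin 3, b m = v m := fun m => by rw [hb]
        fin_cases i <;> fin_cases j <;>
          simp only [bv, Fin.isValue]
        · show ⁅v 0, v 0⁆ = (0:ℂ) • v 0 + (0:ℂ) • v 1 + (0:ℂ) • v 2
          rw [lie_self]; module
        · show ⁅X 0, X 1 + X 2⁆ = (0:ℂ) • v 0 + (0:ℂ) • v 1 + (1:ℂ) • v 2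
          rw [lie_add, h12, h13, hlm1]
          show _ = (0:ℂ) • X 0 + (0:ℂ) • (X 1 + X 2) + (1:ℂ) • (X 1 - X 2)
          module
        · show ⁅X 0, X 1 - X 2⁆ = (0:ℂ) • v 0 + (1:ℂ) • v 1 + (0:ℂ) • v 2
          rw [lie_sub, h12, h13, hlm1]
          show _ = (0:ℂ) • X 0 + (1:ℂ) • (X 1 + X 2) + (0:ℂ) • (X 1 - X 2)
          module
        · show ⁅X 1 + X 2, X 0⁆ = (0:ℂ) • v 0 + (0:ℂ) • v 1 + (-1:ℂ) • v 2
          rw [add_lie, h21, h31, hlm1]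
          show _ = (0:ℂ) • X 0 + (0:ℂ) • (X 1 + X 2) + (-1:ℂ) • (X 1 - X 2)
          module
        · show ⁅v 1, v 1⁆ = (0:ℂ) • v 0 + (0:ℂ) • v 1 + (0:ℂ) • v 2
          rw [lie_self]; module
        · show ⁅X 1 + X 2, X 1 - X 2⁆ = (0:ℂ) • v 0 + (0:ℂ) • v 1 + (0:ℂ) • v 2
          rw [lie_sub, add_lie, add_lie, h23, h32, lie_self, lie_self]
          module
        · show ⁅X 1 - X 2, X 0⁆ = (0:ℂ) • v 0 + (-1:ℂ) • v 1 + (0:ℂ) • v 2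
          rw [sub_lie, h21, h31, hlm1]
          show _ = (0:ℂ) • X 0 + (-1:ℂ) • (X 1 + X 2) + (0:ℂ) • (X 1 - X 2)
          module
        · show ⁅X 1 - X 2, X 1 + X 2⁆ = (0:ℂ) • v 0 + (0:ℂ) • v 1 + (0:ℂ) • v 2
          rw [lie_add, sub_lie, sub_lie, h23, h32, lie_self, lie_self]
          module
        · show ⁅v 2, v 2⁆ = (0:ℂ) • v 0 + (0:ℂ) • v 1 + (0:ℂ) • v 2
          rw [lie_self]; module
      · intro i j m
        fin_cases i <;> fin_cases j <;> fin_cases m <;>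
          first
            | exact hF0
            | exact hF1
            | exact F.neg_mem hF1
    · -- generic case
      set c : ℂ := (1 + l) / l with hc
      have hc0 : c ≠ 0 := by
        rw [hc, div_ne_zero_iff]
        refine ⟨?_, hl⟩
        intro h
        exact hlm1 (by linear_combination h)
      have hkey : (1 + l) ^ 2 = (2 - a) * l := by linear_combination hq
      set t : ℂ := 2 - a with ht
      have htF : t ∈ F := F.sub_mem (by
        rw [show (2:ℂ) = 1 + 1 by norm_num]; exact F.add_mem hF1 hF1) ha
      set v : Fin 3 → 𝔤 := ![c • X 0, X 1 + X 2, c • X 1 + (c * l) • X 2] with hv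
      have hspan : ⊤ ≤ Submodule.span ℂ (Set.range v) := by
        rw [← X.span_eq]
        apply Submodule.span_le.2
        rintro x ⟨i, rfl⟩
        have m0 : v 0 ∈ Submodule.span ℂ (Set.range v) := Submodule.subset_span ⟨0, rfl⟩
        have m1 : v 1 ∈ Submodule.span ℂ (Set.range v) := Submodule.subset_span ⟨1, rfl⟩
        have m2 : v 2 ∈ Submodule.span ℂ (Set.range v) := Submodule.subset_span ⟨2, rfl⟩
        have hl1' : l - 1 ≠ 0 := sub_ne_zero_of_ne hl1
        have hcl : c * (l - 1) ≠ 0 := mul_ne_zero hc0 hl1'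
        have e2' : v 2 - c • v 1 = (c * (l - 1)) • X 2 := by
          show (c • X 1 + (c * l) • X 2) - c • (X 1 + X 2) = (c * (l - 1)) • X 2
          match_scalars <;> ring
        have e2 : X 2 = (c * (l - 1))⁻¹ • (v 2 - c • v 1) := by
          rw [e2', smul_smul, inv_mul_cancel₀ hcl, one_smul]
        have mX2 : X 2 ∈ Submodule.span ℂ (Set.range v) := by
          rw [e2]
          exact Submodule.smul_mem _ _ (Submodule.sub_mem _ m2 (Submodule.smul_mem _ _ m1))
        have e1 : X 1 = v 1 - X 2 := by
          show X 1 = (X 1 + X 2) - X 2; module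
        have mX1 : X 1 ∈ Submodule.span ℂ (Set.range v) := by
          rw [e1]; exact Submodule.sub_mem _ m1 mX2
        have e0 : X 0 = c⁻¹ • v 0 := by
          show X 0 = c⁻¹ • (c • X 0)
          rw [smul_smul, inv_mul_cancel₀ hc0, one_smul]
        have mX0 : X 0 ∈ Submodule.span ℂ (Set.range v) := by
          rw [e0]; exact Submodule.smul_mem _ _ m0
        fin_cases i
        · exact mX0
        · exact mX1
        · exact mX2
      let b := basisOfTopLeSpanOfCardEqFinrank v hspan hrank
      have hb : ⇑b = v := coe_basisOfTopLeSpanOfCardEqFinrank v hspan hrank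
      -- key scalar identities
      have hc2 : c ^ 2 = t * (c - 1) := by
        rw [hc]; field_simp; linear_combination hkey
      have hc2l : c ^ 2 * l ^ 2 = t * (c * l - 1) := by
        rw [hc]; field_simp; linear_combination hkey
      refine defined_of_brackets F b
        ![![![0,0,0], ![0,0,1], ![0,-t,t]],
          ![![0,0,-1], ![0,0,0], ![0,0,0]],
          ![![0,t,-t], ![0,0,0], ![0,0,0]]] ?_ ?_
      · intro i j
        have bv : ∀ m : Fin 3, b m = v m := fun m => by rw [hb]
        have br01 : ⁅v 0, v 1⁆ = v 2 := by
          show ⁅c • X 0, X 1 + X 2⁆ = c • X 1 + (c * l) • X 2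
          rw [smul_lie, lie_add, h12, h13]; module
        have br02 : ⁅v 0, v 2⁆ = (-t) • v 1 + t • v 2 := by
          show ⁅c • X 0, c • X 1 + (c * l) • X 2⁆
              = (-t) • (X 1 + X 2) + t • (c • X 1 + (c * l) • X 2)
          rw [smul_lie, lie_add, lie_smul, lie_smul, h12, h13]
          match_scalars
          · linear_combination hc2
          · linear_combination hc2l
        have br12 : ⁅v 1, v 2⁆ = 0 := by
          show ⁅X 1 + X 2, c • X 1 + (c * l) • X 2⁆ = 0
          rw [lie_add, lie_smul, lie_smul, add_lie, add_lie, h23, h32, lie_self, lie_self]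
          simp
        fin_cases i <;> fin_cases j <;> simp only [bv, Fin.isValue]
        · show ⁅v 0, v 0⁆ = (0:ℂ) • v 0 + (0:ℂ) • v 1 + (0:ℂ) • v 2
          rw [lie_self]; module
        · show ⁅v 0, v 1⁆ = (0:ℂ) • v 0 + (0:ℂ) • v 1 + (1:ℂ) • v 2
          rw [br01]; module
        · show ⁅v 0, v 2⁆ = (0:ℂ) • v 0 + (-t) • v 1 + t • v 2
          rw [br02]; module
        · show ⁅v 1, v 0⁆ = (0:ℂ) • v 0 + (0:ℂ) • v 1 + (-1:ℂ) • v 2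
          rw [← lie_skew, br01]; module
        · show ⁅v 1, v 1⁆ = (0:ℂ) • v 0 + (0:ℂ) • v 1 + (0:ℂ) • v 2
          rw [lie_self]; module
        · show ⁅v 1, v 2⁆ = (0:ℂ) • v 0 + (0:ℂ) • v 1 + (0:ℂ) • v 2
          rw [br12]; module
        · show ⁅v 2, v 0⁆ = (0:ℂ) • v 0 + t • v 1 + (-t) • v 2
          rw [← lie_skew, br02]; module
        · show ⁅v 2, v 1⁆ = (0:ℂ) • v 0 + (0:ℂ) • v 1 + (0:ℂ) • v 2
          rw [← lie_skew, br12]; module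
        · show ⁅v 2, v 2⁆ = (0:ℂ) • v 0 + (0:ℂ) • v 1 + (0:ℂ) • v 2
          rw [lie_self]; module
      · intro i j m
        fin_cases i <;> fin_cases j <;> fin_cases m <;>
          first
            | exact hF0
            | exact hF1
            | exact F.neg_mem hF1
            | exact htF
            | exact F.neg_mem htF

end Helpers

/-- For `λ ∈ ℂ*`, the complex Lie algebra `r_{3,λ}(ℂ)` with basis `X₁, X₂, X₃` and
brackets `[X₁,X₂] = X₂`, `[X₁,X₃] = λ X₃` (and `[X₂,X₃] = 0`) is defined over a
subfield `F ⊆ ℂ` if and only if `λ² + aλ + 1 = 0` for some `a ∈ F`. -/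
theorem r3_lambda_definedOver_iff (F : Subfield ℂ) (l : ℂ) (hl : l ≠ 0)
    (𝔤 : Type u) [LieRing 𝔤] [LieAlgebra ℂ 𝔤] (X : Module.Basis (Fin 3) ℂ 𝔤)
    (h12 : ⁅X 0, X 1⁆ = X 1) (h13 : ⁅X 0, X 2⁆ = l • X 2) (h23 : ⁅X 1, X 2⁆ = 0) :
    IsDefinedOverSubfield F 𝔤 ↔ ∃ a ∈ F, l ^ 2 + a * l + 1 = 0 := by
  constructor
  · intro h
    exact fwd F l hl 𝔤 X h12 h13 h23 h
  · rintro ⟨a, ha, hq⟩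
    exact bwd 𝔤 F l hl X h12 h13 h23 a ha hq
end
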